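/- Let s(y) := Re(Λ(y)/(1+iy)) - π²N/12, where Λ(y) := N(π²/6 - log(2)²(1+iy)²/2 - Li₂(2^{-(1+iy)})) for y ∈ ℝ and N a positive integer. Then s(y) ≤ 0 for all y ∈ ℝ, with equality if and only if y = 0. -/

import Mathlib

set_option maxHeartbeats 1000000

open Real Complex

/-- Complex dilogarithm Li₂(w) = Σ_{n≥1} wⁿ/n² (for |w| < 1 the series converges). -/
noncomputable def Li2C (w : ℂ) : ℂ := ∑' n : ℕ, w ^ (n + 1) / ((n : ℂ) + 1) ^ 2

/-- Λ(y) := N(π²/6 - log(2)²(1+iy)²/2 - Li₂(2^{-(1+iy)})). -/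
noncomputable def Lam (N : ℕ) (y : ℝ) : ℂ :=
  (N : ℂ) * ((π : ℂ) ^ 2 / 6 - (Real.log 2 : ℂ) ^ 2 * (1 + (y : ℂ) * Complex.I) ^ 2 / 2 -
    Li2C ((2 : ℂ) ^ (-(1 + (y : ℂ) * Complex.I))))

/-- s(y) := Re(Λ(y)/(1+iy)) - π²N/12. -/
noncomputable def sfun (N : ℕ) (y : ℝ) : ℝ :=
  (Lam N y / (1 + (y : ℂ) * Complex.I)).re - π ^ 2 * N / 12

private lemma basel : HasSum (fun n : ℕ => (1:ℝ)/((n:ℝ)+1)^2) (π^2/6) := by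
  have h2 := (hasSum_nat_add_iff' (f := fun n : ℕ => (1:ℝ)/(n:ℝ)^2) 1).mpr hasSum_zeta_two
  simp only [Finset.range_one, Finset.sum_singleton, Nat.cast_zero] at h2
  norm_num at h2
  convert h2 using 2 with n
  · rfl
  push_cast
  ring

private lemma loghalf : HasSum (fun n : ℕ => (1/2:ℝ)^(n+1)/((n:ℝ)+1)) (Real.log 2) := by
  have h := hasSum_pow_div_log_of_abs_lt_one (x := (1/2:ℝ)) (by rw [abs_of_pos] <;> norm_num)
  rw [show (1:ℝ) - 1/2 = 2⁻¹ by norm_num, Real.log_inv, neg_neg] at h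
  exact h

private lemma int1 : HasSum (fun n : ℕ => (1/2:ℝ)^(n+1)/((n:ℝ)+1)^2)
    (∫ t in (0:ℝ)..(1/2), -Real.log (1-t)/t) := by
  have key := intervalIntegral.hasSum_integral_of_dominated_convergence
    (μ := MeasureTheory.volume) (a := (0:ℝ)) (b := 1/2)
    (F := fun (n:ℕ) (t:ℝ) => t^n/((n:ℝ)+1))
    (f := fun t => -Real.log (1-t)/t)
    (bound := fun n _ => (1/2:ℝ)^n)
    (fun n => (Continuous.aestronglyMeasurable (by fun_prop)))
    ?_ ?_ ?_ ?_
  · have hval : ∀ n : ℕ, (∫ t in (0:ℝ)..(1/2), t^n/((n:ℝ)+1)) = (1/2:ℝ)^(n+1)/((n:ℝ)+1)^2 := by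
      intro n
      rw [intervalIntegral.integral_div, integral_pow]
      have hn : ((n:ℝ)+1) ≠ 0 := by positivity
      rw [zero_pow (Nat.succ_ne_zero n)]
      field_simp
      ring
    simp_rw [hval] at key
    exact key
  · intro n
    filter_upwards with t ht
    rw [Set.uIoc_of_le (by norm_num : (0:ℝ) ≤ 1/2)] at ht
    have h1 : (0:ℝ) < t := ht.1
    have h2 : t ≤ 1/2 := ht.2
    have hnn : (0:ℝ) ≤ t^n/((n:ℝ)+1) := by positivity
    rw [_root_.Real.norm_eq_abs, _root_.abs_of_nonneg hnn]
    calc t^n/((n:ℝ)+1) ≤ t^n := by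
          apply div_le_self (by positivity)
          simp
      _ ≤ (1/2:ℝ)^n := by
          apply pow_le_pow_left₀ h1.le h2
  · filter_upwards with t _
    exact summable_geometric_of_lt_one (by norm_num) (by norm_num)
  · exact intervalIntegrable_const
  · filter_upwards with t ht
    rw [Set.uIoc_of_le (by norm_num : (0:ℝ) ≤ 1/2)] at ht
    have h1 : (0:ℝ) < t := ht.1
    have habs : |t| < 1 := by rw [abs_of_pos h1]; linarith [ht.2]
    have h := (hasSum_pow_div_log_of_abs_lt_one habs).div_const t
    convert h using 2 with n
    · rfl
    rw [pow_succ]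
    field_simp

private lemma intsub : (∫ t in (0:ℝ)..(1/2), -Real.log (1-t)/t)
    = ∫ u in (1/2:ℝ)..1, -Real.log u/(1-u) := by
  have h := intervalIntegral.integral_comp_sub_left (a := (0:ℝ)) (b := 1/2)
    (fun u => -Real.log u/(1-u)) 1
  norm_num at h
  rw [← h]

private lemma ae_ne_one : ∀ᵐ u : ℝ ∂MeasureTheory.volume, u ≠ 1 := by
  rw [MeasureTheory.ae_iff]
  have h : {u : ℝ | ¬ u ≠ 1} = {1} := by ext u; simp
  rw [h]
  exact MeasureTheory.measure_singleton 1

private lemma int2 : HasSum (fun n : ℕ => ∫ u in (1/2:ℝ)..1, (-Real.log u) * u^n)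
    (∫ u in (1/2:ℝ)..1, -Real.log u/(1-u)) := by
  apply intervalIntegral.hasSum_integral_of_dominated_convergence
    (bound := fun (n:ℕ) (u:ℝ) => (2*(1-u))*u^n)
  · intro n
    exact ((Real.measurable_log.neg.mul (measurable_id.pow_const n)).aestronglyMeasurable)
  · intro n
    filter_upwards with u hu
    rw [Set.uIoc_of_le (by norm_num : (1/2:ℝ) ≤ 1)] at hu
    have h0 : (0:ℝ) < u := lt_trans (by norm_num) hu.1
    have h1 : u ≤ 1 := hu.2
    have hlognn : 0 ≤ -Real.log u := neg_nonneg.mpr (Real.log_nonpos h0.le h1)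
    have hlog : -Real.log u ≤ 2*(1-u) := by
      have hi := Real.log_le_sub_one_of_pos (inv_pos.mpr h0)
      rw [Real.log_inv] at hi
      have hu2 : u⁻¹ ≤ 2 := by
        rw [inv_le_comm₀ h0 (by norm_num)]
        linarith [hu.1]
      have : -Real.log u ≤ u⁻¹ - 1 := by linarith
      have h2 : u⁻¹ - 1 ≤ 2*(1-u) := by
        have hmul := mul_le_mul_of_nonneg_left hu2 (by linarith : (0:ℝ) ≤ 1-u)
        have hc := mul_inv_cancel₀ h0.ne'
        nlinarith [hmul, hc]
      linarith
    rw [_root_.Real.norm_eq_abs, _root_.abs_of_nonneg (mul_nonneg hlognn (by positivity))]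
    exact mul_le_mul_of_nonneg_right hlog (by positivity)
  · filter_upwards [ae_ne_one] with u hne hu
    rw [Set.uIoc_of_le (by norm_num : (1/2:ℝ) ≤ 1)] at hu
    have h0 : (0:ℝ) < u := lt_trans (by norm_num) hu.1
    have h1 : u < 1 := lt_of_le_of_ne hu.2 hne
    exact (summable_geometric_of_lt_one h0.le h1).mul_left _
  · rw [intervalIntegrable_iff]
    apply ((MeasureTheory.integrableOn_const_iff (C := (2:ℝ))).mpr
      (Or.inr ?_) : MeasureTheory.IntegrableOn (fun _ : ℝ => (2:ℝ)) _ _).congr_fun_ae ?_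
    · rw [Set.uIoc_of_le (by norm_num : (1/2:ℝ) ≤ 1)]
      exact measure_Ioc_lt_top
    · filter_upwards [MeasureTheory.ae_restrict_of_ae ae_ne_one,
        MeasureTheory.ae_restrict_mem measurableSet_uIoc] with u hne hu
      rw [Set.uIoc_of_le (by norm_num : (1/2:ℝ) ≤ 1)] at hu
      have h0 : (0:ℝ) < u := lt_trans (by norm_num) hu.1
      have h1 : u < 1 := lt_of_le_of_ne hu.2 hne
      rw [tsum_mul_left, tsum_geometric_of_lt_one h0.le h1]
      have hne' : (1:ℝ) - u ≠ 0 := by linarith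
      field_simp
  · filter_upwards [ae_ne_one] with u hne hu
    rw [Set.uIoc_of_le (by norm_num : (1/2:ℝ) ≤ 1)] at hu
    have h0 : (0:ℝ) < u := lt_trans (by norm_num) hu.1
    have h1 : u < 1 := lt_of_le_of_ne hu.2 hne
    have h := (hasSum_geometric_of_lt_one h0.le h1).mul_left (-Real.log u)
    rw [div_eq_mul_inv]
    exact h

private lemma I2val (n : ℕ) : (∫ u in (1/2:ℝ)..1, (-Real.log u) * u^n)
    = 1/((n:ℝ)+1)^2 - (1/2:ℝ)^(n+1)*(Real.log 2/((n:ℝ)+1) + 1/((n:ℝ)+1)^2) := by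
  have hne : ((n:ℝ)+1) ≠ 0 := by positivity
  have hd : ∀ u ∈ Set.uIcc (1/2:ℝ) 1, HasDerivAt
      (fun u : ℝ => -(u^(n+1) * (Real.log u/((n:ℝ)+1) - 1/((n:ℝ)+1)^2)))
      ((-Real.log u) * u^n) u := by
    intro u hu
    rw [Set.uIcc_of_le (by norm_num : (1/2:ℝ) ≤ 1)] at hu
    have hu0 : (0:ℝ) < u := lt_of_lt_of_le (by norm_num) hu.1
    have h1 := ((hasDerivAt_pow (n+1) u).mul
      (((Real.hasDerivAt_log hu0.ne').div_const ((n:ℝ)+1)).sub_const (1/((n:ℝ)+1)^2))).neg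
    convert h1 using 1
    · rfl
    · rfl
    · rfl
    have hps : u^(n+1) = u^n * u := pow_succ u n
    push_cast
    field_simp
    ring
  rw [intervalIntegral.integral_eq_sub_of_hasDerivAt hd ?_]
  · rw [Real.log_one, show Real.log (1/2) = -Real.log 2 by
      rw [one_div, Real.log_inv]]
    push_cast
    field_simp
    ring
  · apply ContinuousOn.intervalIntegrable
    apply ContinuousOn.mul
    · apply ContinuousOn.neg
      apply Real.continuousOn_log.mono
      intro u hu
      rw [Set.uIcc_of_le (by norm_num : (1/2:ℝ) ≤ 1)] at hu
      simp only [Set.mem_compl_iff, Set.mem_singleton_iff]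
      intro h0
      rw [h0] at hu
      norm_num at hu
    · exact (continuous_pow n).continuousOn

lemma li2_half : HasSum (fun n : ℕ => (1/2:ℝ)^(n+1)/((n:ℝ)+1)^2)
    (π^2/12 - (Real.log 2)^2/2) := by
  have h1 := int1
  have hJ := intsub
  have h2 := int2
  rw [← hJ] at h2
  set S := ∫ t in (0:ℝ)..(1/2), -Real.log (1-t)/t with hS
  have h3 : HasSum (fun n : ℕ => (∫ u in (1/2:ℝ)..1, (-Real.log u) * u^n))
      (π^2/6 - Real.log 2 * Real.log 2 - S) := by
    have hb := (basel.sub (loghalf.mul_left (Real.log 2))).sub h1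
    convert hb using 2 with n
    · rfl
    rw [I2val]
    ring
  have hSS := h2.unique h3
  have hval : S = π^2/12 - (Real.log 2)^2/2 := by nlinarith [hSS]
  rw [← hval]
  exact h1

noncomputable def Gfun (y a : ℝ) : ℝ :=
  (1 - Real.exp (-a)) * (1 + y^2)
    - (1 - Real.exp (-a) * Real.cos (a*y) + y * (Real.exp (-a) * Real.sin (a*y)))

lemma Gfun_hasDeriv (y t : ℝ) :
    HasDerivAt (Gfun y) ((1+y^2) * Real.exp (-t) * (1 - Real.cos (t*y))) t := by
  have he : HasDerivAt (fun t : ℝ => Real.exp (-t)) (-Real.exp (-t)) t := by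
    simpa [Function.comp_def] using (Real.hasDerivAt_exp (-t)).comp t (hasDerivAt_neg t)
  have hc : HasDerivAt (fun t : ℝ => Real.cos (t*y)) (-Real.sin (t*y) * y) t := by
    simpa [Function.comp_def] using (Real.hasDerivAt_cos (t*y)).comp t (hasDerivAt_mul_const y)
  have hs : HasDerivAt (fun t : ℝ => Real.sin (t*y)) (Real.cos (t*y) * y) t := by
    simpa [Function.comp_def] using (Real.hasDerivAt_sin (t*y)).comp t (hasDerivAt_mul_const y)
  have h1 : HasDerivAt (fun t : ℝ => (1 - Real.exp (-t)) * (1+y^2))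
      (Real.exp (-t) * (1+y^2)) t := by
    simpa using ((hasDerivAt_const t (1:ℝ)).sub he).mul_const (1+y^2)
  have h4 := ((hasDerivAt_const t (1:ℝ)).sub (he.mul hc)).add ((he.mul hs).const_mul y)
  have h5 := h1.sub h4
  convert h5 using 1
  · rfl
  · rfl
  · rfl
  ring

lemma Gfun_zero (y : ℝ) : Gfun y 0 = 0 := by simp [Gfun]

lemma Gfun_eq_integral (y a : ℝ) :
    Gfun y a = ∫ t in (0:ℝ)..a, (1+y^2) * Real.exp (-t) * (1 - Real.cos (t*y)) := by
  rw [intervalIntegral.integral_eq_sub_of_hasDerivAt (fun t _ => Gfun_hasDeriv y t)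
    (Continuous.intervalIntegrable (by fun_prop) _ _), Gfun_zero, sub_zero]

lemma Gfun_nonneg (y : ℝ) {a : ℝ} (ha : 0 ≤ a) : 0 ≤ Gfun y a := by
  rw [Gfun_eq_integral]
  apply intervalIntegral.integral_nonneg ha
  intro t _
  have hc := Real.cos_le_one (t*y)
  have he := Real.exp_pos (-t)
  exact mul_nonneg (mul_nonneg (by positivity) he.le) (by linarith)

lemma Gfun_pos {y : ℝ} (hy : y ≠ 0) {a : ℝ} (ha : 0 < a) : 0 < Gfun y a := by
  have hy0 : 0 < |y| := abs_pos.mpr hy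
  set m := min a (1/|y|) with hm
  have hmpos : 0 < m := lt_min ha (by positivity)
  have hma : m ≤ a := min_le_left _ _
  have hcont : Continuous (fun t : ℝ => (1+y^2) * Real.exp (-t) * (1 - Real.cos (t*y))) := by
    fun_prop
  rw [Gfun_eq_integral]
  rw [← intervalIntegral.integral_add_adjacent_intervals
    (hcont.intervalIntegrable 0 m) (hcont.intervalIntegrable m a)]
  have hpos : 0 < ∫ t in (0:ℝ)..m, (1+y^2) * Real.exp (-t) * (1 - Real.cos (t*y)) := by
    apply intervalIntegral.intervalIntegral_pos_of_pos_on (hcont.intervalIntegrable 0 m)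
      _ hmpos
    intro t ht
    have ht0 : 0 < t := ht.1
    have htm : t < m := ht.2
    have habs : |t*y| < 1 := by
      rw [abs_mul, abs_of_pos ht0]
      have h2 : t < 1/|y| := lt_of_lt_of_le htm (min_le_right _ _)
      calc t * |y| < (1/|y|) * |y| := by
            exact mul_lt_mul_of_pos_right h2 hy0
        _ = 1 := by field_simp
    have hcos : Real.cos (t*y) < 1 := by
      rw [← Real.cos_abs]
      have h0 : (0:ℝ) < |t*y| := abs_pos.mpr (mul_ne_zero ht0.ne' hy)
      have := Real.cos_lt_cos_of_nonneg_of_le_pi le_rfl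
        (le_trans habs.le (by linarith [Real.pi_gt_three])) h0
      simpa using this
    have he := Real.exp_pos (-t)
    exact mul_pos (mul_pos (by positivity) he) (by linarith)
  have hnn : 0 ≤ ∫ t in m..a, (1+y^2) * Real.exp (-t) * (1 - Real.cos (t*y)) := by
    apply intervalIntegral.integral_nonneg hma
    intro t _
    have hc := Real.cos_le_one (t*y)
    have he := Real.exp_pos (-t)
    exact mul_nonneg (mul_nonneg (by positivity) he.le) (by linarith)
  linarith

noncomputable def Hterm (y : ℝ) (n : ℕ) : ℝ :=
  -(Gfun y (((n:ℝ)+1) * Real.log 2) / (1 + y^2)) / ((n:ℝ)+1)^2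

lemma hterm_nonpos (y : ℝ) (n : ℕ) : Hterm y n ≤ 0 := by
  have h := Gfun_nonneg y (a := ((n:ℝ)+1) * Real.log 2)
    (by positivity)
  unfold Hterm
  have hc : (0:ℝ) < 1 + y^2 := by positivity
  have hn : (0:ℝ) < ((n:ℝ)+1)^2 := by positivity
  apply div_nonpos_of_nonpos_of_nonneg _ hn.le
  simp only [neg_nonpos]
  positivity

lemma hterm_neg {y : ℝ} (hy : y ≠ 0) : Hterm y 0 < 0 := by
  have h := Gfun_pos hy (a := ((0:ℕ):ℝ) + 1) (ha := by norm_num)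
  have hL : 0 < Real.log 2 := Real.log_pos one_lt_two
  have h := Gfun_pos hy (a := (((0:ℕ):ℝ)+1) * Real.log 2) (by norm_num [hL])
  unfold Hterm
  have hc : (0:ℝ) < 1 + y^2 := by positivity
  apply div_neg_of_neg_of_pos _ (by norm_num)
  simp only [neg_neg, neg_lt, neg_zero]
  positivity

lemma hterm_zero (n : ℕ) : Hterm 0 n = 0 := by
  simp [Hterm, Gfun]

lemma sfun_repr (N : ℕ) (y : ℝ) :
    sfun N y = N * ∑' n, Hterm y n ∧ Summable (Hterm y) := by
  set L := Real.log 2 with hL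
  set c : ℝ := 1 + y^2 with hc
  have hcpos : 0 < c := by positivity
  set s : ℂ := 1 + (y:ℂ)*Complex.I with hs
  have hsre : s.re = 1 := by simp [hs]
  have hsim : s.im = y := by simp [hs]
  have hs0 : s ≠ 0 := fun h => by simpa [hsre] using congrArg Complex.re h
  have hnormSq : Complex.normSq s = c := by
    rw [Complex.normSq_apply, hsre, hsim, hc]; ring
  have hw : (2:ℂ)^(-s) = Complex.exp (-((L:ℂ) * s)) := by
    rw [show (2:ℂ) = ((2:ℝ):ℂ) by norm_num]
    rw [Complex.cpow_def_of_ne_zero (by norm_num)]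
    rw [← Complex.ofReal_log (by norm_num : (0:ℝ) ≤ 2)]
    rw [← hL]
    ring_nf
  have hwn : ∀ n : ℕ, ((2:ℂ)^(-s))^(n+1)
      = Complex.exp (-(((((n:ℝ)+1) * L : ℝ)):ℂ) * s) := by
    intro n
    rw [hw, ← Complex.exp_nat_mul]
    congr 1
    push_cast
    ring
  have hterm_re : ∀ n : ℕ, (((2:ℂ)^(-s))^(n+1) / ((n:ℂ)+1)^2 / s).re
      = Real.exp (-(((n:ℝ)+1)*L)) * (Real.cos ((((n:ℝ)+1)*L)*y)
          - y * Real.sin ((((n:ℝ)+1)*L)*y)) / (((n:ℝ)+1)^2 * c) := by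
    intro n
    rw [hwn n, div_right_comm]
    rw [show ((n:ℂ)+1)^2 = ((((n:ℝ)+1)^2 : ℝ):ℂ) by push_cast; ring]
    rw [Complex.div_ofReal_re]
    rw [Complex.div_re, hnormSq, hsre, hsim]
    rw [Complex.exp_re, Complex.exp_im]
    have h1 : (-(((((n:ℝ)+1) * L : ℝ)):ℂ) * s).re = -(((n:ℝ)+1)*L) := by
      simp [Complex.mul_re, hsre, hsim]
    have h2 : (-(((((n:ℝ)+1) * L : ℝ)):ℂ) * s).im = -(((n:ℝ)+1)*L)*y := by
      simp [Complex.mul_im, hsre, hsim]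
    rw [h1, h2, neg_mul, Real.cos_neg, Real.sin_neg]
    have hn : ((n:ℝ)+1) ≠ 0 := by positivity
    field_simp
    ring
  have hsummable : Summable (fun n : ℕ => ((2:ℂ)^(-s))^(n+1) / ((n:ℂ)+1)^2) := by
    apply Summable.of_norm
    have hg : Summable (fun n : ℕ => (1/2:ℝ)^(n+1)) := by
      simpa [pow_succ] using
        (summable_geometric_of_lt_one (by norm_num : (0:ℝ) ≤ 1/2) (by norm_num)).mul_right (2⁻¹)
    apply Summable.of_nonneg_of_le (fun n => norm_nonneg _) (fun n => ?_) hg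
    rw [norm_div, norm_pow, hw, Complex.norm_exp]
    have hre2 : (-((L:ℂ)*s)).re = -L := by simp [Complex.mul_re, hsre, hsim]
    rw [hre2, Real.exp_neg, Real.exp_log two_pos]
    have hd : (1:ℝ) ≤ ‖((n:ℂ)+1)^2‖ := by
      rw [norm_pow]
      have h1 : (1:ℝ) ≤ ‖((n:ℂ)+1)‖ := by
        rw [show ((n:ℂ)+1) = (((n+1:ℕ)):ℂ) by push_cast; rfl, Complex.norm_natCast]
        exact_mod_cast Nat.one_le_iff_ne_zero.mpr (Nat.succ_ne_zero n)
      nlinarith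
    calc (2⁻¹:ℝ)^(n+1) / ‖((n:ℂ)+1)^2‖ ≤ (2⁻¹:ℝ)^(n+1) := div_le_self (by positivity) hd
      _ = (1/2:ℝ)^(n+1) := by norm_num
  have hLi2 : HasSum (fun n : ℕ => ((2:ℂ)^(-s))^(n+1) / ((n:ℂ)+1)^2 / s)
      (Li2C ((2:ℂ)^(-s)) / s) := by
    rw [Li2C]
    exact hsummable.hasSum.div_const s
  have hre : HasSum (fun n : ℕ => (((2:ℂ)^(-s))^(n+1) / ((n:ℂ)+1)^2 / s).re)
      ((Li2C ((2:ℂ)^(-s)) / s).re) := by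
    simpa using hLi2.mapL Complex.reCLM
  set X := (Li2C ((2:ℂ)^(-s)) / s).re with hX
  simp only [hterm_re] at hre
  have hE : ∀ n : ℕ, Real.exp (-(((n:ℝ)+1)*L)) = (1/2:ℝ)^(n+1) := by
    intro n
    rw [show (((n:ℝ)+1)*L) = ((n+1:ℕ):ℝ)*L by push_cast; ring,
      Real.exp_neg, Real.exp_nat_mul, hL, Real.exp_log two_pos, ← inv_pow]
    norm_num
  have hH : HasSum (Hterm y) (π^2/6/c - X - π^2/6 + (π^2/12 - L^2/2)) := by
    have h := (((basel.div_const c).sub hre).sub basel).add li2_half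
    convert h using 1
    · rfl
    funext n
    have hn : ((n:ℝ)+1) ≠ 0 := by positivity
    simp only [Hterm, Gfun, hE n]
    rw [← hc, ← hL]
    simp only [hE n]
    field_simp
    ring
  have hlam : (Lam N y / s).re = (N:ℝ) * (π^2/6/c - L^2/2 - X) := by
    have h1 : Lam N y / s
        = (N:ℂ) * (((π:ℂ)^2/6)/s - ((L:ℂ)^2*s)/2 - Li2C ((2:ℂ)^(-s))/s) := by
      rw [Lam, ← hs, mul_div_assoc]
      congr 1
      rw [sub_div, sub_div]
      congr 2
      rw [hL]
      field_simp
    rw [h1]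
    have hπ : ((((π:ℂ)^2/6))/s).re = π^2/6/c := by
      rw [show ((π:ℂ)^2/6) = (((π^2/6 : ℝ)):ℂ) by push_cast; ring]
      rw [Complex.div_re, hnormSq, hsre, hsim]
      simp only [Complex.ofReal_re, Complex.ofReal_im]
      field_simp
      ring
    have hLs : (((L:ℂ)^2*s)/2).re = L^2/2 := by
      rw [show ((L:ℂ)^2*s)/2 = (((L^2/2 : ℝ)):ℂ)*s by push_cast; ring]
      rw [Complex.mul_re]
      simp [hsre, hsim, ← Complex.ofReal_pow]
    simp only [Complex.mul_re, Complex.natCast_re, Complex.natCast_im, zero_mul, sub_zero,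
      Complex.sub_re, hπ, hLs]
    rw [← hX]
  constructor
  · have hsfun : sfun N y = (Lam N y / s).re - π^2*N/12 := by rw [sfun, ← hs]
    rw [hsfun, hlam, hH.tsum_eq]
    ring
  · exact hH.summable

/-- s(y) ≤ 0 for all y ∈ ℝ, with equality iff y = 0. -/
theorem sfun_nonpos (N : ℕ) (hN : 0 < N) (y : ℝ) :
    sfun N y ≤ 0 ∧ (sfun N y = 0 ↔ y = 0) := by
  obtain ⟨heq, hsumm⟩ := sfun_repr N y
  have hts : ∑' n, Hterm y n ≤ 0 := tsum_nonpos (fun n => hterm_nonpos y n)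
  constructor
  · rw [heq]
    exact mul_nonpos_iff.mpr (Or.inl ⟨by positivity, hts⟩)
  · constructor
    · intro h0
      by_contra hy
      have h1 : ∑' n, Hterm y n ≤ Hterm y 0 := by
        have h := Summable.le_tsum hsumm.neg 0 (fun j _ => neg_nonneg.mpr (hterm_nonpos y j))
        rw [tsum_neg] at h
        linarith
      have h2 : ∑' n, Hterm y n < 0 := lt_of_le_of_lt h1 (hterm_neg hy)
      have h3 : (0:ℝ) < N := by exact_mod_cast hN
      rw [heq] at h0
      nlinarith
    · intro h0
      subst h0
      rw [heq, (tsum_congr hterm_zero).trans tsum_zero, mul_zero]
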